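/- arXiv:1007.3655 — 2 statements merged into one kernel-verified Lean document; each statement's English description precedes it below -/
import Mathlib

section
/- Quantum packing bound: Let Q be a subspace of a finite-dimensional Hilbert space H with projector P_Q, and let {L_i}_{i=1}^n be linearly independent operators satisfying P_Q L_i† L_j P_Q = M_{ij} P_Q with M an invertible (nondegenerate) Hermitian n×n matrix. Then dim H ≥ n · dim Q. -/
/-- Quantum packing bound: a nondegenerate code (invertible Knill–Laflamme
    matrix M for n linearly independent errors) satisfies dim H ≥ n · dim Q. -/
theorem quantum_packing_bound
    {H : Type*} [NormedAddCommGroup H] [InnerProductSpace ℂ H]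
    [FiniteDimensional ℂ H]
    {n : ℕ} (Q : Submodule ℂ H) (hQ : Q ≠ ⊥)
    (P : H →ₗ[ℂ] H)
    (hPproj : P ∘ₗ P = P)
    (hPsa : LinearMap.adjoint P = P)
    (hPrange : LinearMap.range P = Q)
    (L : Fin n → (H →ₗ[ℂ] H)) (hL : LinearIndependent ℂ L)
    (M : Matrix (Fin n) (Fin n) ℂ) (hM : M.IsHermitian) (hMinv : IsUnit M)
    (hKL : ∀ i j, P ∘ₗ (LinearMap.adjoint (L i)) ∘ₗ (L j) ∘ₗ P = M i j • P) :
    n * Module.finrank ℂ Q ≤ Module.finrank ℂ H := by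
  -- P fixes elements of Q
  have hPfix : ∀ x : Q, P (x : H) = (x : H) := by
    intro x
    obtain ⟨y, hy⟩ : (x : H) ∈ LinearMap.range P := hPrange ▸ x.2
    have := congrFun (congrArg (fun f => f.toFun) hPproj) y
    change P (P y) = P y at this
    rw [← hy]
    simpa using this
  -- the packing map
  let f : (Fin n → Q) →ₗ[ℂ] H :=
    LinearMap.lsum ℂ (fun _ : Fin n => Q) ℂ (fun i => (L i) ∘ₗ Q.subtype)
  have hf : ∀ q : Fin n → Q, f q = ∑ i, L i (q i) := by
    intro q
    simp [f, LinearMap.lsum_apply]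
  -- injectivity
  have hinj : Function.Injective f := by
    rw [← LinearMap.ker_eq_bot]
    rw [LinearMap.ker_eq_bot']
    intro q hq
    rw [hf] at hq
    -- apply P ∘ (L k)† to the relation
    have key : ∀ k, ∑ j, M k j • ((q j : H)) = 0 := by
      intro k
      have h0 : (P ∘ₗ LinearMap.adjoint (L k)) (∑ j, L j (q j)) = 0 := by
        rw [hq]; simp
      rw [map_sum] at h0
      have heach : ∀ j, (P ∘ₗ LinearMap.adjoint (L k)) (L j (q j))
          = M k j • ((q j : H)) := by
        intro j
        have h1 := LinearMap.ext_iff.mp (hKL k j) ((q j : H))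
        simp only [LinearMap.comp_apply, LinearMap.smul_apply, hPfix] at h1
        simp only [LinearMap.comp_apply]
        exact h1
      rw [Finset.sum_congr rfl (fun j _ => heach j)] at h0
      exact h0
    -- invert M
    funext i
    have hMi : M⁻¹ * M = 1 :=
      Matrix.nonsing_inv_mul M ((Matrix.isUnit_iff_isUnit_det M).mp hMinv)
    have hz : ((q i : H)) = 0 := by
      have h2 : ∑ j, ((M⁻¹ * M) i j) • ((q j : H)) = ((q i : H)) := by
        rw [hMi]
        simp [Matrix.one_apply]
      rw [← h2]
      simp only [Matrix.mul_apply, Finset.sum_smul]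
      rw [Finset.sum_comm]
      refine Finset.sum_eq_zero fun k _ => ?_
      simp only [mul_smul]
      rw [← Finset.smul_sum, key k, smul_zero]
    exact Subtype.ext hz
  -- conclude via dimensions
  have hle := LinearMap.finrank_le_finrank_of_injective hinj
  have hdim : Module.finrank ℂ (Fin n → Q) = n * Module.finrank ℂ Q := by
    rw [Module.finrank_pi_fintype]
    simp [Finset.sum_const, Fintype.card_fin]
  omega
end

section
/- The two-ancilla code for fully correlated triple-Pauli noise on 3 qubits saturates the packing bound: for the code Q = ℂ² ⊗ span{|0⟩⊗|+⟩} ⊆ (ℂ²)^{⊗3} (dim Q = 2) and the four error operators {I, X⊗X⊗X, Y⊗Y⊗Y, Z⊗Z⊗Z}, the Knill–Laflamme condition P_Q L_i† L_j P_Q = M_{ij} P_Q holds with M = I₄ (the 4×4 identity), so the code is nondegenerate and dim H = 8 = dim Q · rank M. -/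
open Matrix
open scoped Kronecker

/-- The Pauli matrices I, X, Y, Z. -/
noncomputable def pauli4 : Fin 4 → Matrix (Fin 2) (Fin 2) ℂ :=
  ![1,
    !![0, 1; 1, 0],
    !![0, -Complex.I; Complex.I, 0],
    !![1, 0; 0, -1]]

/-- The four fully correlated error operators I, X⊗X⊗X, Y⊗Y⊗Y, Z⊗Z⊗Z. -/
noncomputable def tripleErr (a : Fin 4) :
    Matrix (Fin 2 × Fin 2 × Fin 2) (Fin 2 × Fin 2 × Fin 2) ℂ :=
  pauli4 a ⊗ₖ (pauli4 a ⊗ₖ pauli4 a)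

/-- The orthogonal projector onto Q = ℂ² ⊗ span{|0⟩⊗|+⟩}: identity on the
    first qubit tensored with the projectors onto |0⟩ and |+⟩. -/
noncomputable def Pcode : Matrix (Fin 2 × Fin 2 × Fin 2) (Fin 2 × Fin 2 × Fin 2) ℂ :=
  (1 : Matrix (Fin 2) (Fin 2) ℂ) ⊗ₖ
    (!![1, 0; 0, 0] ⊗ₖ !![(1 : ℂ)/2, 1/2; 1/2, 1/2])

lemma kron_conj {l m n p : Type*} (A : Matrix l m ℂ) (B : Matrix n p ℂ) :
    (A ⊗ₖ B)ᴴ = Aᴴ ⊗ₖ Bᴴ := by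
  ext ⟨a, b⟩ ⟨c, d⟩
  simp [conjTranspose_apply, kroneckerMap_apply, mul_comm]

lemma pauli_herm (a : Fin 4) : (pauli4 a)ᴴ = pauli4 a := by
  fin_cases a <;>
    simp [pauli4, eta_fin_two ((_ : Matrix (Fin 2) (Fin 2) ℂ))ᴴ, conjTranspose_apply,
      one_fin_two, Complex.ext_iff]

lemma pauli_sq (a : Fin 4) : pauli4 a * pauli4 a = 1 := by
  fin_cases a <;> ext i j <;> fin_cases i <;> fin_cases j <;>
    simp [pauli4, Matrix.mul_apply, Fin.sum_univ_two, Matrix.one_apply,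
      Matrix.vecMul, dotProduct, Matrix.vecHead, Matrix.vecTail, Complex.ext_iff]

lemma key (i j : Fin 4) :
    Pcode * (tripleErr i)ᴴ * tripleErr j * Pcode
      = (pauli4 i * pauli4 j) ⊗ₖ
        ((!![1, 0; 0, 0] * pauli4 i * pauli4 j * !![1, 0; 0, 0]) ⊗ₖ
         (!![(1 : ℂ)/2, 1/2; 1/2, 1/2] * pauli4 i * pauli4 j
            * !![(1 : ℂ)/2, 1/2; 1/2, 1/2])) := by
  simp only [Pcode, tripleErr, kron_conj, pauli_herm]
  simp only [← Matrix.mul_kronecker_mul, Matrix.one_mul, Matrix.mul_one]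

lemma sand0 (M : Matrix (Fin 2) (Fin 2) ℂ) (h : M 0 0 = 0) :
    !![1, 0; 0, 0] * M * !![1, 0; 0, 0] = 0 := by
  ext a b
  fin_cases a <;> fin_cases b <;>
    simp [Matrix.mul_apply, Fin.sum_univ_two, Matrix.vecMul, dotProduct,
      Matrix.vecHead, Matrix.vecTail, h]

lemma sandp (M : Matrix (Fin 2) (Fin 2) ℂ)
    (h : M 0 0 + M 0 1 + (M 1 0 + M 1 1) = 0) :
    !![(1 : ℂ)/2, 1/2; 1/2, 1/2] * M * !![(1 : ℂ)/2, 1/2; 1/2, 1/2] = 0 := by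
  ext a b
  fin_cases a <;> fin_cases b <;>
    · simp [Matrix.mul_apply, Fin.sum_univ_two, Matrix.vecMul, dotProduct,
        Matrix.vecHead, Matrix.vecTail]
      linear_combination h / 4

lemma sand0' (M N : Matrix (Fin 2) (Fin 2) ℂ) (h : (M * N) 0 0 = 0) :
    !![1, 0; 0, 0] * M * N * !![1, 0; 0, 0] = 0 := by
  rw [Matrix.mul_assoc !![1, 0; 0, 0] M N]
  exact sand0 _ h

lemma sandp' (M N : Matrix (Fin 2) (Fin 2) ℂ)
    (h : (M * N) 0 0 + (M * N) 0 1 + ((M * N) 1 0 + (M * N) 1 1) = 0) :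
    !![(1 : ℂ)/2, 1/2; 1/2, 1/2] * M * N * !![(1 : ℂ)/2, 1/2; 1/2, 1/2] = 0 := by
  rw [Matrix.mul_assoc !![(1 : ℂ)/2, 1/2; 1/2, 1/2] M N]
  exact sandp _ h

lemma offdiag (C : Matrix (Fin 2) (Fin 2) ℂ)
    (h : C 0 0 * (C 0 0 + C 0 1 + (C 1 0 + C 1 1)) = 0) :
    C ⊗ₖ ((!![1, 0; 0, 0] * C * !![1, 0; 0, 0]) ⊗ₖ
      (!![(1 : ℂ)/2, 1/2; 1/2, 1/2] * C * !![(1 : ℂ)/2, 1/2; 1/2, 1/2])) = 0 := by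
  ext ⟨a, b, c⟩ ⟨d, e, f⟩
  fin_cases b <;> fin_cases e <;> fin_cases c <;> fin_cases f <;>
    · simp [kroneckerMap_apply, Matrix.mul_apply, Fin.sum_univ_two, Matrix.vecMul,
        dotProduct, Matrix.vecHead, Matrix.vecTail]
      try
        rcases mul_eq_zero.mp h with h' | h'
        · exact Or.inr (Or.inl h')
        · exact Or.inr (Or.inr (by linear_combination h' / 4))

lemma offdiag' (M N : Matrix (Fin 2) (Fin 2) ℂ)
    (h : (M * N) 0 0 * ((M * N) 0 0 + (M * N) 0 1 + ((M * N) 1 0 + (M * N) 1 1)) = 0) :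
    (M * N) ⊗ₖ ((!![1, 0; 0, 0] * M * N * !![1, 0; 0, 0]) ⊗ₖ
      (!![(1 : ℂ)/2, 1/2; 1/2, 1/2] * M * N * !![(1 : ℂ)/2, 1/2; 1/2, 1/2])) = 0 := by
  rw [Matrix.mul_assoc !![1, 0; 0, 0] M N, Matrix.mul_assoc !![(1 : ℂ)/2, 1/2; 1/2, 1/2] M N]
  exact offdiag _ h

lemma d0 (i : Fin 4) :
    !![(1 : ℂ), 0; 0, 0] * pauli4 i * pauli4 i * !![(1 : ℂ), 0; 0, 0]
      = !![(1 : ℂ), 0; 0, 0] := by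
  rw [Matrix.mul_assoc !![(1 : ℂ), 0; 0, 0] (pauli4 i) (pauli4 i), pauli_sq, Matrix.mul_one]
  ext a b
  fin_cases a <;> fin_cases b <;>
    simp [Matrix.mul_apply, Fin.sum_univ_two, Matrix.vecMul, dotProduct,
      Matrix.vecHead, Matrix.vecTail]

lemma dp (i : Fin 4) :
    !![(1 : ℂ)/2, 1/2; 1/2, 1/2] * pauli4 i * pauli4 i * !![(1 : ℂ)/2, 1/2; 1/2, 1/2]
      = !![(1 : ℂ)/2, 1/2; 1/2, 1/2] := by
  rw [Matrix.mul_assoc !![(1 : ℂ)/2, 1/2; 1/2, 1/2] (pauli4 i) (pauli4 i), pauli_sq,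
    Matrix.mul_one]
  ext a b
  fin_cases a <;> fin_cases b <;>
    · simp [Matrix.mul_apply, Fin.sum_univ_two, Matrix.vecMul, dotProduct,
        Matrix.vecHead, Matrix.vecTail]
      try norm_num

noncomputable def Bmat : Matrix (Fin 2 × Fin 2 × Fin 2) (Fin 2) ℂ :=
  fun p k => if p.1 = k ∧ p.2.1 = 0 then 1 else 0

noncomputable def Dmat : Matrix (Fin 2) (Fin 2 × Fin 2 × Fin 2) ℂ :=
  fun k p => if p.1 = k ∧ p.2.1 = 0 then 1/2 else 0

lemma Pcode_eq : Pcode = Bmat * Dmat := by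
  ext ⟨a, b, c⟩ ⟨d, e, f⟩
  fin_cases a <;> fin_cases b <;> fin_cases c <;> fin_cases d <;> fin_cases e <;> fin_cases f <;>
    simp [Pcode, Bmat, Dmat, Matrix.mul_apply, Fin.sum_univ_two, Matrix.one_apply,
      kroneckerMap_apply]

lemma DB_eq : Dmat * Bmat = 1 := by
  ext k l
  fin_cases k <;> fin_cases l <;>
    simp [Bmat, Dmat, Matrix.mul_apply, Fintype.sum_prod_type, Fin.sum_univ_two,
      Matrix.one_apply] <;> norm_num

/-- The two-ancilla code for fully correlated triple-Pauli noise saturates the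
    quantum packing bound: the Knill–Laflamme matrix is the 4×4 identity (so
    the code is nondegenerate), dim Q = 2, and dim H = 8 = dim Q · rank M. -/
theorem ancilla_code_saturates_packing_bound :
    (∀ i j : Fin 4, Pcode * (tripleErr i)ᴴ * tripleErr j * Pcode
      = (1 : Matrix (Fin 4) (Fin 4) ℂ) i j • Pcode) ∧
    Pcode.rank = 2 ∧
    Fintype.card (Fin 2 × Fin 2 × Fin 2)
      = Pcode.rank * (1 : Matrix (Fin 4) (Fin 4) ℂ).rank := by
  have hrank : Pcode.rank = 2 := by
    have hle : Pcode.rank ≤ 2 := by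
      calc Pcode.rank ≤ Bmat.rank := by rw [Pcode_eq]; exact Matrix.rank_mul_le_left _ _
        _ ≤ 2 := by simpa using Bmat.rank_le_card_width
    have hge : 2 ≤ Pcode.rank := by
      have h1 : Dmat * Pcode * Bmat = 1 := by
        rw [Pcode_eq, ← Matrix.mul_assoc, DB_eq, Matrix.one_mul, DB_eq]
      calc (2 : ℕ) = (1 : Matrix (Fin 2) (Fin 2) ℂ).rank := by simp [Matrix.rank_one]
        _ = (Dmat * Pcode * Bmat).rank := by rw [h1]
        _ ≤ (Dmat * Pcode).rank := Matrix.rank_mul_le_left _ _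
        _ ≤ Pcode.rank := Matrix.rank_mul_le_right _ _
    omega
  refine ⟨fun i j => ?_, hrank, ?_⟩
  · rcases eq_or_ne i j with rfl | hne
    · rw [key, pauli_sq, d0, dp, Matrix.one_apply_eq, one_smul]
      rfl
    · rw [key, Matrix.one_apply_ne hne, zero_smul]
      fin_cases i <;> fin_cases j <;>
        first
        | exact absurd rfl hne
        | exact offdiag' _ _ (by norm_num [pauli4, Matrix.mul_apply, Fin.sum_univ_two,
            Matrix.one_apply, Complex.ext_iff, Matrix.vecMul, dotProduct,
            Matrix.vecHead, Matrix.vecTail])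
  · rw [hrank, Matrix.rank_one]
    simp
end
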